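/- Let r, σ, b > 0 and a ∈ ℝ with a > 0, σ > a·r and r > 1. Set ξ = (σ·b/(2a²))·(a(r−2) − σ + √((σ − a·r)² + 4aσ)). Then ξ > 0, σ·b + a·ξ > 0, and the two points S± = (±x₁, ±y₁, z₁), where x₁ = σ·b·√ξ/(σ·b + a·ξ), y₁ = √ξ, z₁ = σ·ξ/(σ·b + a·ξ), are zeros of the vector field f of the Lorenz-like system (i.e., equilibria). -/

import Mathlib

/-- For the Lorenz-like system with `a > 0`, `σ > a·r` and `r > 1`, the quantity
`ξ = (σb/(2a²))·(a(r−2) − σ + √((σ − ar)² + 4aσ))` is positive, `σb + aξ > 0`,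
and the two symmetric points `S± = (±x₁, ±y₁, z₁)` are equilibria. -/
theorem stmt_7 (r σ b a : ℝ) (hr : 0 < r) (hσ : 0 < σ) (hb : 0 < b)
    (ha : 0 < a) (hσar : a * r < σ) (hr1 : 1 < r) :
    let ξ := σ * b / (2 * a ^ 2) *
      (a * (r - 2) - σ + Real.sqrt ((σ - a * r) ^ 2 + 4 * a * σ))
    let x₁ := σ * b * Real.sqrt ξ / (σ * b + a * ξ)
    let y₁ := Real.sqrt ξ
    let z₁ := σ * ξ / (σ * b + a * ξ)
    0 < ξ ∧ 0 < σ * b + a * ξ ∧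
    (-σ * (x₁ - y₁) - a * y₁ * z₁ = 0 ∧
      r * x₁ - y₁ - x₁ * z₁ = 0 ∧
      -b * z₁ + x₁ * y₁ = 0) ∧
    (-σ * (-x₁ - -y₁) - a * -y₁ * z₁ = 0 ∧
      r * -x₁ - -y₁ - -x₁ * z₁ = 0 ∧
      -b * z₁ + -x₁ * -y₁ = 0) := by
  intro ξ x₁ y₁ z₁
  have hξ : ξ = σ * b / (2 * a ^ 2) *
      (a * (r - 2) - σ + Real.sqrt ((σ - a * r) ^ 2 + 4 * a * σ)) := rfl
  have hx : x₁ = σ * b * Real.sqrt ξ / (σ * b + a * ξ) := rfl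
  have hy : y₁ = Real.sqrt ξ := rfl
  have hz : z₁ = σ * ξ / (σ * b + a * ξ) := rfl
  clear_value ξ x₁ y₁ z₁
  have hs2 : (Real.sqrt ((σ - a * r) ^ 2 + 4 * a * σ)) ^ 2
      = (σ - a * r) ^ 2 + 4 * a * σ := Real.sq_sqrt (by positivity)
  have hs0 : 0 < Real.sqrt ((σ - a * r) ^ 2 + 4 * a * σ) :=
    Real.sqrt_pos.2 (by positivity)
  have hspos : σ - a * (r - 2) < Real.sqrt ((σ - a * r) ^ 2 + 4 * a * σ) := by
    rcases le_or_gt (σ - a * (r - 2)) 0 with h | h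
    · linarith
    · rw [show σ - a * (r - 2) = Real.sqrt ((σ - a * (r - 2)) ^ 2) from
        (Real.sqrt_sq h.le).symm]
      apply Real.sqrt_lt_sqrt (by positivity)
      nlinarith [mul_pos ha (sub_pos.2 hr1)]
  have hξpos : 0 < ξ := by
    rw [hξ]
    have h1 : 0 < a * (r - 2) - σ + Real.sqrt ((σ - a * r) ^ 2 + 4 * a * σ) := by linarith
    positivity
  have hDpos : 0 < σ * b + a * ξ := by positivity
  have hDne : σ * b + a * ξ ≠ 0 := hDpos.ne'
  have ha' : (a : ℝ) ≠ 0 := ha.ne'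
  have hquad : a ^ 2 * ξ ^ 2 + σ * b * (2 * a + σ - a * r) * ξ - (r - 1) * σ ^ 2 * b ^ 2 = 0 := by
    rw [hξ]
    field_simp
    have hs2' : Real.sqrt ((σ - a * r) ^ 2 + a * σ * 4) ^ 2 = (σ - a * r) ^ 2 + 4 * a * σ := by
      rw [show a * σ * 4 = 4 * a * σ by ring]; exact hs2
    linear_combination (σ ^ 2 * b ^ 2) * hs2'
  have hss : Real.sqrt ξ * Real.sqrt ξ = ξ := Real.mul_self_sqrt hξpos.le
  have e1 : -σ * (x₁ - y₁) - a * y₁ * z₁ = 0 := by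
    rw [hx, hy, hz]; field_simp; ring
  have key : r * σ * b * (σ * b + a * ξ) - (σ * b + a * ξ) ^ 2 - σ ^ 2 * b * ξ = 0 := by
    linear_combination -hquad
  have e2 : r * x₁ - y₁ - x₁ * z₁ = 0 := by
    have h : r * x₁ - y₁ - x₁ * z₁ = Real.sqrt ξ *
        (r * σ * b * (σ * b + a * ξ) - (σ * b + a * ξ) ^ 2 - σ ^ 2 * b * ξ) /
        (σ * b + a * ξ) ^ 2 := by
      rw [hx, hy, hz]; field_simp
    rw [h, key]; simp
  have e3 : -b * z₁ + x₁ * y₁ = 0 := by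
    rw [hx, hy, hz]; field_simp; linear_combination (b * σ) * hss
  refine ⟨hξpos, hDpos, ⟨e1, e2, e3⟩, ?_, ?_, ?_⟩
  · linear_combination -e1
  · linear_combination -e2
  · linear_combination e3
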